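/- arXiv:2301.10952 — 5 statements merged into one kernel-verified Lean document; each statement's English description precedes it below -/
import Mathlib

section
/- The category of reflexive directed graphs is cartesian closed: for any rgraphs A and B there is an exponential object B^A. -/
/-- A reflexive directed graph. -/
structure RGraph where
  V : Type
  E : Type
  src : E → V
  tgt : E → V
  loop : V → E
  loop_src : ∀ v, src (loop v) = v
  loop_tgt : ∀ v, tgt (loop v) = v

/-- A morphism of reflexive directed graphs. -/
@[ext]
structure RGraphHom (G H : RGraph) where
  onV : G.V → H.V
  onE : G.E → H.E
  map_src : ∀ e, H.src (onE e) = onV (G.src e)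
  map_tgt : ∀ e, H.tgt (onE e) = onV (G.tgt e)
  map_loop : ∀ v, onE (G.loop v) = H.loop (onV v)

/-- The identity rgraph morphism. -/
def RGraphHom.id (G : RGraph) : RGraphHom G G :=
  ⟨fun v => v, fun e => e, fun _ => rfl, fun _ => rfl, fun _ => rfl⟩

/-- Composition of rgraph morphisms (diagrammatic order). -/
def RGraphHom.comp {G H K : RGraph} (f : RGraphHom G H) (g : RGraphHom H K) :
    RGraphHom G K :=
  ⟨fun v => g.onV (f.onV v), fun e => g.onE (f.onE e),
    fun e => by show K.src (g.onE (f.onE e)) = _; rw [g.map_src, f.map_src],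
    fun e => by show K.tgt (g.onE (f.onE e)) = _; rw [g.map_tgt, f.map_tgt],
    fun v => by show g.onE (f.onE (G.loop v)) = _; rw [f.map_loop, g.map_loop]⟩

instance : CategoryTheory.Category RGraph where
  Hom := RGraphHom
  id := RGraphHom.id
  comp := RGraphHom.comp
  id_comp := by intros; rfl
  comp_id := by intros; rfl
  assoc := by intros; rfl
/-- The terminal rgraph: one vertex and only its distinguished loop. -/
def OneR : RGraph :=
  ⟨Unit, Unit, fun _ => (), fun _ => (), fun _ => (), fun _ => rfl, fun _ => rfl⟩

/-- The walking-edge rgraph `E`: vertices `s = false` and `t = true`, their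
distinguished loops (`Sum.inl`), and one extra edge `Sum.inr ()` from `s` to `t`. -/
def WalkingEdge : RGraph :=
  ⟨Bool, Bool ⊕ Unit,
    fun e => match e with | .inl b => b | .inr _ => false,
    fun e => match e with | .inl b => b | .inr _ => true,
    fun b => .inl b, fun _ => rfl, fun _ => rfl⟩

/-- The binary product of two rgraphs, formed componentwise. -/
def RGraph.prod (G H : RGraph) : RGraph :=
  ⟨G.V × H.V, G.E × H.E,
    fun e => (G.src e.1, H.src e.2), fun e => (G.tgt e.1, H.tgt e.2),
    fun v => (G.loop v.1, H.loop v.2),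
    fun v => by simp [G.loop_src, H.loop_src],
    fun v => by simp [G.loop_tgt, H.loop_tgt]⟩

/-- First projection from a product rgraph. -/
def RGraph.fst (G H : RGraph) : RGraphHom (G.prod H) G :=
  ⟨Prod.fst, Prod.fst, fun _ => rfl, fun _ => rfl, fun _ => rfl⟩

/-- Second projection from a product rgraph. -/
def RGraph.snd (G H : RGraph) : RGraphHom (G.prod H) H :=
  ⟨Prod.snd, Prod.snd, fun _ => rfl, fun _ => rfl, fun _ => rfl⟩

/-- Apply a morphism on the left factor of a product rgraph. -/
def RGraphHom.prodMapLeft {C D : RGraph} (h : RGraphHom C D) (A : RGraph) :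
    RGraphHom (C.prod A) (D.prod A) :=
  ⟨fun v => (h.onV v.1, v.2), fun e => (h.onE e.1, e.2),
    fun e => by show (D.src (h.onE e.1), _) = _; rw [h.map_src]; rfl,
    fun e => by show (D.tgt (h.onE e.1), _) = _; rw [h.map_tgt]; rfl,
    fun v => by show (h.onE (C.loop v.1), _) = _; rw [h.map_loop]; rfl⟩

namespace RGraphExp

variable (A B : RGraph)

/-- Source vertex of an edge of the exponential. -/
def srcHom (φ : RGraphHom (WalkingEdge.prod A) B) : RGraphHom A B :=
  ⟨fun v => φ.onV (false, v), fun e => φ.onE (.inl false, e),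
   fun e => φ.map_src (.inl false, e),
   fun e => φ.map_tgt (.inl false, e),
   fun v => φ.map_loop (false, v)⟩

/-- Target vertex of an edge of the exponential. -/
def tgtHom (φ : RGraphHom (WalkingEdge.prod A) B) : RGraphHom A B :=
  ⟨fun v => φ.onV (true, v), fun e => φ.onE (.inl true, e),
   fun e => φ.map_src (.inl true, e),
   fun e => φ.map_tgt (.inl true, e),
   fun v => φ.map_loop (true, v)⟩

/-- Distinguished loop of a vertex of the exponential. -/
def loopHom (g : RGraphHom A B) : RGraphHom (WalkingEdge.prod A) B :=
  ⟨fun p => g.onV p.2, fun p => g.onE p.2,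
   fun e => g.map_src e.2, fun e => g.map_tgt e.2, fun v => g.map_loop v.2⟩

/-- The exponential rgraph `B^A`. -/
def Exp : RGraph :=
  ⟨RGraphHom A B, RGraphHom (WalkingEdge.prod A) B,
   srcHom A B, tgtHom A B, loopHom A B,
   fun _ => rfl, fun _ => rfl⟩

/-- Evaluation morphism `B^A × A → B`. -/
def ev : RGraphHom ((Exp A B).prod A) B :=
  ⟨fun p => p.1.onV p.2, fun p => p.1.onE (.inr (), p.2),
   fun e => e.1.map_src (.inr (), e.2),
   fun e => e.1.map_tgt (.inr (), e.2),
   fun v => v.1.map_loop v.2⟩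

variable {A B} {C : RGraph} (f : RGraphHom (C.prod A) B)

/-- endpoint picker -/
def pick (d : C.E) : Bool → C.V
  | false => C.src d
  | true => C.tgt d

/-- edge picker -/
def edgeOf (d : C.E) : Bool ⊕ Unit → C.E
  | .inl b => C.loop (pick d b)
  | .inr _ => d

lemma src_edgeOf (d : C.E) (ε : Bool ⊕ Unit) :
    C.src (edgeOf d ε) = pick d (WalkingEdge.src ε) := by
  cases ε with
  | inl b => cases b <;> simp [edgeOf, pick, C.loop_src, WalkingEdge]
  | inr u => rfl

lemma tgt_edgeOf (d : C.E) (ε : Bool ⊕ Unit) :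
    C.tgt (edgeOf d ε) = pick d (WalkingEdge.tgt ε) := by
  cases ε with
  | inl b => cases b <;> simp [edgeOf, pick, C.loop_tgt, WalkingEdge]
  | inr u => rfl

/-- Curried morphism on vertices. -/
def curryV (c : C.V) : RGraphHom A B :=
  ⟨fun v => f.onV (c, v), fun e => f.onE (C.loop c, e),
   fun e => by refine (f.map_src _).trans ?_; show f.onV (C.src (C.loop c), _) = _; rw [C.loop_src],
   fun e => by refine (f.map_tgt _).trans ?_; show f.onV (C.tgt (C.loop c), _) = _; rw [C.loop_tgt],
   fun v => f.map_loop (c, v)⟩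

/-- Curried morphism on edges. -/
def curryE (d : C.E) : RGraphHom (WalkingEdge.prod A) B :=
  ⟨fun p => f.onV (pick d p.1, p.2), fun p => f.onE (edgeOf d p.1, p.2),
   fun p => by refine (f.map_src _).trans ?_; show f.onV (C.src (edgeOf d p.1), _) = _; exact congrArg (fun x => f.onV (x, _)) (src_edgeOf d p.1),
   fun p => by refine (f.map_tgt _).trans ?_; show f.onV (C.tgt (edgeOf d p.1), _) = _; exact congrArg (fun x => f.onV (x, _)) (tgt_edgeOf d p.1),
   fun p => f.map_loop (pick d p.1, p.2)⟩

/-- The curried morphism. -/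
def curry : RGraphHom C (Exp A B) :=
  ⟨curryV f, curryE f,
   fun _ => rfl, fun _ => rfl,
   fun c => by
     apply RGraphHom.ext
     · funext p
       obtain ⟨b, v⟩ := p
       show f.onV (pick (C.loop c) b, v) = f.onV (c, v)
       cases b <;> simp [pick, C.loop_src, C.loop_tgt]
     · funext p
       obtain ⟨ε, e⟩ := p
       show f.onE (edgeOf (C.loop c) ε, e) = f.onE (C.loop c, e)
       cases ε with
       | inl b => cases b <;> simp [edgeOf, pick, C.loop_src, C.loop_tgt]
       | inr u => rfl⟩

end RGraphExp

/-- The category of reflexive directed graphs is cartesian closed: for any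
rgraphs `A` and `B` there is an exponential object `B^A`, i.e. an rgraph `Exp`
with an evaluation morphism `Exp × A → B` through which every morphism
`C × A → B` factors uniquely. -/
theorem rgraph_cartesianClosed (A B : RGraph) :
    ∃ (Exp : RGraph) (ev : RGraphHom (Exp.prod A) B),
      ∀ (C : RGraph) (f : RGraphHom (C.prod A) B),
        ∃! h : RGraphHom C Exp, (h.prodMapLeft A).comp ev = f := by
  classical
  refine ⟨RGraphExp.Exp A B, RGraphExp.ev A B, fun C f => ⟨RGraphExp.curry f, ?_, ?_⟩⟩
  · apply RGraphHom.ext <;> rfl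
  · intro h' hf
    subst hf
    set f := (h'.prodMapLeft A).comp (RGraphExp.ev A B) with hfdef
    apply RGraphHom.ext
    · funext c
      apply RGraphHom.ext
      · rfl
      · funext e
        show (h'.onV c).onE e = (h'.onE (C.loop c)).onE (.inr (), e)
        rw [h'.map_loop]
        rfl
    · funext d
      apply RGraphHom.ext
      · funext p
        obtain ⟨b, v⟩ := p
        cases b
        · show (h'.onE d).onV (false, v) = (h'.onV (C.src d)).onV v
          rw [← h'.map_src d]; rfl
        · show (h'.onE d).onV (true, v) = (h'.onV (C.tgt d)).onV v
          rw [← h'.map_tgt d]; rfl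
      · funext p
        obtain ⟨ε, e⟩ := p
        cases ε with
        | inl b =>
          cases b
          · show (h'.onE d).onE (.inl false, e)
              = (h'.onE (C.loop (C.src d))).onE (.inr (), e)
            rw [h'.map_loop, ← h'.map_src d]; rfl
          · show (h'.onE d).onE (.inl true, e)
              = (h'.onE (C.loop (C.tgt d))).onE (.inr (), e)
            rw [h'.map_loop, ← h'.map_tgt d]; rfl
        | inr u => rfl
end

section
/- The rgraph Ω with vertices 'true' and 'false', distinguished loops at each, an extra loop at 'true', an edge from 'true' to 'false', and an edge from 'false' to 'true', is a subobject classifier for the category of reflexive directed graphs. -/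
/-- The edges of the truth-value rgraph: the distinguished loops at `true` and
`false`, an extra loop at `true`, an edge from `true` to `false`, and an edge
from `false` to `true`. -/
inductive OmegaE | ltrue | lfalse | extraTrue | tf | ft

/-- The truth-value rgraph `Ω`. -/
def Omega : RGraph :=
  ⟨Bool, OmegaE,
    fun e => match e with
      | .ltrue => true | .lfalse => false | .extraTrue => true
      | .tf => true | .ft => false,
    fun e => match e with
      | .ltrue => true | .lfalse => false | .extraTrue => true
      | .tf => false | .ft => true,
    fun b => match b with | true => .ltrue | false => .lfalse,
    fun b => by cases b <;> rfl, fun b => by cases b <;> rfl⟩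

/-- The morphism `true : 1 → Ω` picking out the vertex `true`. -/
def trueHom : RGraphHom OneR Omega :=
  ⟨fun _ => true, fun _ => .ltrue, fun _ => rfl, fun _ => rfl, fun _ => rfl⟩

/-- The unique morphism from an rgraph to the terminal rgraph. -/
def bangHom (G : RGraph) : RGraphHom G OneR :=
  ⟨fun _ => (), fun _ => (), fun _ => rfl, fun _ => rfl, fun _ => rfl⟩


open CategoryTheory Classical

noncomputable section OmegaAux

@[simp] lemma comp_onV {G H K : RGraph} (f : G ⟶ H) (g : H ⟶ K) (v : G.V) :
    (f ≫ g).onV v = g.onV (f.onV v) := rfl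

@[simp] lemma comp_onE {G H K : RGraph} (f : G ⟶ H) (g : H ⟶ K) (e : G.E) :
    (f ≫ g).onE e = g.onE (f.onE e) := rfl

/-- The morphism picking out a vertex. -/
def ptHom (G : RGraph) (v : G.V) : RGraphHom OneR G :=
  ⟨fun _ => v, fun _ => G.loop v, fun _ => G.loop_src v, fun _ => G.loop_tgt v,
    fun _ => rfl⟩

/-- The morphism picking out an edge. -/
def edgeHom (G : RGraph) (e : G.E) : RGraphHom WalkingEdge G :=
  ⟨fun b => match b with | true => G.tgt e | false => G.src e,
    fun x => match x with
      | .inl true => G.loop (G.tgt e)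
      | .inl false => G.loop (G.src e)
      | .inr _ => e,
    fun x => by rcases x with (_|_) | u <;> simp [WalkingEdge, G.loop_src],
    fun x => by rcases x with (_|_) | u <;> simp [WalkingEdge, G.loop_tgt],
    fun b => by cases b <;> rfl⟩

lemma pt_comp {S G : RGraph} (m : S ⟶ G) (v : S.V) :
    (ptHom S v : OneR ⟶ S) ≫ m = (ptHom G (m.onV v) : OneR ⟶ G) := by
  apply RGraphHom.ext
  · funext u; rfl
  · funext u; exact m.map_loop v

lemma edge_comp {S G : RGraph} (m : S ⟶ G) (e : S.E) :
    (edgeHom S e : WalkingEdge ⟶ S) ≫ m = (edgeHom G (m.onE e) : WalkingEdge ⟶ G) := by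
  apply RGraphHom.ext
  · funext b; cases b
    · exact (m.map_src e).symm
    · exact (m.map_tgt e).symm
  · funext x
    rcases x with (_|_) | u
    · show m.onE (S.loop _) = G.loop _
      rw [m.map_loop, m.map_src]
    · show m.onE (S.loop _) = G.loop _
      rw [m.map_loop, m.map_tgt]
    · rfl

lemma mono_onV_inj {S G : RGraph} (m : S ⟶ G) (hm : Mono m) :
    Function.Injective m.onV := by
  intro v w h
  have h2 : (ptHom S v : OneR ⟶ S) ≫ m = (ptHom S w : OneR ⟶ S) ≫ m := by
    rw [pt_comp, pt_comp, h]
  have := (cancel_mono m).mp h2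
  exact congrFun (congrArg RGraphHom.onV this) ()

lemma mono_onE_inj {S G : RGraph} (m : S ⟶ G) (hm : Mono m) :
    Function.Injective m.onE := by
  intro e f h
  have h2 : (edgeHom S e : WalkingEdge ⟶ S) ≫ m = (edgeHom S f : WalkingEdge ⟶ S) ≫ m := by
    rw [edge_comp, edge_comp, h]
  have := (cancel_mono m).mp h2
  exact congrFun (congrArg RGraphHom.onE this) (.inr ())

variable {S G : RGraph} (m : S ⟶ G)

/-- Vertex part of the characteristic map. -/
def chiV (v : G.V) : Bool := if ∃ w, m.onV w = v then true else false

lemma chiV_true {v : G.V} (h : ∃ w, m.onV w = v) : chiV m v = true := if_pos h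
lemma chiV_false {v : G.V} (h : ¬ ∃ w, m.onV w = v) : chiV m v = false := if_neg h

lemma chiV_eq_true_iff {v : G.V} : chiV m v = true ↔ ∃ w, m.onV w = v := by
  unfold chiV; by_cases h : ∃ w, m.onV w = v <;> simp [h]

/-- Edge part of the characteristic map. -/
def chiE (e : G.E) : OmegaE :=
  if ∃ f, m.onE f = e then .ltrue
  else match chiV m (G.src e), chiV m (G.tgt e) with
    | true, true => .extraTrue
    | true, false => .tf
    | false, true => .ft
    | false, false => .lfalse

lemma chiE_eq_ltrue_iff {e : G.E} : chiE m e = .ltrue ↔ ∃ f, m.onE f = e := by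
  unfold chiE
  by_cases h : ∃ f, m.onE f = e
  · simp [h]
  · simp only [h, if_false, iff_false]
    rcases hs : chiV m (G.src e) <;> rcases ht : chiV m (G.tgt e) <;> simp_all

lemma chi_src (e : G.E) : Omega.src (chiE m e) = chiV m (G.src e) := by
  unfold chiE
  by_cases h : ∃ f, m.onE f = e
  · simp only [h, if_true]
    obtain ⟨f, rfl⟩ := h
    rw [m.map_src]
    exact (chiV_true m ⟨_, rfl⟩).symm
  · simp only [h, if_false]
    rcases hs : chiV m (G.src e) <;> rcases ht : chiV m (G.tgt e) <;> simp_all [Omega]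

lemma chi_tgt (e : G.E) : Omega.tgt (chiE m e) = chiV m (G.tgt e) := by
  unfold chiE
  by_cases h : ∃ f, m.onE f = e
  · simp only [h, if_true]
    obtain ⟨f, rfl⟩ := h
    rw [m.map_tgt]
    exact (chiV_true m ⟨_, rfl⟩).symm
  · simp only [h, if_false]
    rcases hs : chiV m (G.src e) <;> rcases ht : chiV m (G.tgt e) <;> simp_all [Omega]

lemma chi_loop (v : G.V) : chiE m (G.loop v) = Omega.loop (chiV m v) := by
  by_cases h : ∃ w, m.onV w = v
  · obtain ⟨w, rfl⟩ := h
    have h1 : chiE m (G.loop (m.onV w)) = .ltrue :=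
      (chiE_eq_ltrue_iff m).mpr ⟨S.loop w, m.map_loop w⟩
    rw [h1, chiV_true m ⟨w, rfl⟩]; rfl
  · have hne : ¬ ∃ f, m.onE f = G.loop v := by
      rintro ⟨f, hf⟩
      exact h ⟨S.src f, by rw [← m.map_src, hf, G.loop_src]⟩
    have hv : chiV m v = false := chiV_false m h
    unfold chiE
    simp only [hne, if_false, G.loop_src, G.loop_tgt, hv]
    rfl

/-- The lift into the subobject, given pointwise membership. -/
def theLift (hinjV : Function.Injective m.onV) (hinjE : Function.Injective m.onE)
    {T : RGraph} (q : T ⟶ G)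
    (hV : ∀ v, ∃ w, m.onV w = q.onV v) (hE : ∀ e, ∃ f, m.onE f = q.onE e) :
    RGraphHom T S :=
  ⟨fun v => Classical.choose (hV v), fun e => Classical.choose (hE e),
    fun e => by
      apply hinjV
      rw [← m.map_src, Classical.choose_spec (hE e), Classical.choose_spec (hV _),
        q.map_src],
    fun e => by
      apply hinjV
      rw [← m.map_tgt, Classical.choose_spec (hE e), Classical.choose_spec (hV _),
        q.map_tgt],
    fun v => by
      apply hinjE
      rw [Classical.choose_spec (hE _), m.map_loop, Classical.choose_spec (hV v)]
      exact q.map_loop v⟩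

lemma theLift_comp (hinjV : Function.Injective m.onV) (hinjE : Function.Injective m.onE)
    {T : RGraph} (q : T ⟶ G)
    (hV : ∀ v, ∃ w, m.onV w = q.onV v) (hE : ∀ e, ∃ f, m.onE f = q.onE e) :
    (theLift m hinjV hinjE q hV hE : T ⟶ S) ≫ m = q := by
  apply RGraphHom.ext
  · funext v; exact Classical.choose_spec (hV v)
  · funext e; exact Classical.choose_spec (hE e)

/-- The characteristic morphism. -/
def chiHom : RGraphHom G Omega :=
  ⟨chiV m, chiE m, chi_src m, chi_tgt m, chi_loop m⟩

end OmegaAux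

open CategoryTheory in
/-- The truth-value rgraph `Ω`, together with `true : 1 → Ω`, is a subobject
classifier for the category of reflexive directed graphs: every monomorphism
`m : S → G` is a pullback of `true` along a unique characteristic morphism
`χ : G → Ω`. -/
theorem omega_is_subobject_classifier :
    ∀ (S G : RGraph) (m : S ⟶ G), Mono m →
      ∃! χ : G ⟶ Omega,
        IsPullback (bangHom S : S ⟶ OneR) m (trueHom : OneR ⟶ Omega) χ := by
  intro S G m hm
  refine ⟨chiHom m, ?_, ?_⟩
  · -- the pullback square
    have hinjV := mono_onV_inj m hm
    have hinjE := mono_onE_inj m hm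
    have w : (bangHom S : S ⟶ OneR) ≫ (trueHom : OneR ⟶ Omega) = m ≫ chiHom m := by
      apply RGraphHom.ext
      · funext v
        exact (chiV_true m ⟨v, rfl⟩).symm
      · funext e
        exact ((chiE_eq_ltrue_iff m).mpr ⟨e, rfl⟩).symm
    apply IsPullback.of_isLimit' ⟨w⟩
    have hVmemb : ∀ (s : @Limits.PullbackCone RGraph _ OneR G Omega trueHom (chiHom m))
        (v : s.pt.V), ∃ w, m.onV w = s.snd.onV v := by
      intro s v
      have := congrFun (congrArg RGraphHom.onV s.condition) v
      simp only [comp_onV] at this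
      exact (chiV_eq_true_iff m).mp this.symm
    have hEmemb : ∀ (s : @Limits.PullbackCone RGraph _ OneR G Omega trueHom (chiHom m))
        (e : s.pt.E), ∃ f, m.onE f = s.snd.onE e := by
      intro s e
      have := congrFun (congrArg RGraphHom.onE s.condition) e
      simp only [comp_onE] at this
      exact (chiE_eq_ltrue_iff m).mp this.symm
    apply Limits.PullbackCone.IsLimit.mk _
      (fun s => theLift m hinjV hinjE s.snd (hVmemb s) (hEmemb s))
    · intro s
      apply RGraphHom.ext
      · funext v; rfl
      · funext e; rfl
    · intro s
      exact theLift_comp m hinjV hinjE s.snd (hVmemb s) (hEmemb s)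
    · intro s l h1 h2
      have := theLift_comp m hinjV hinjE s.snd (hVmemb s) (hEmemb s)
      exact (cancel_mono m).mp (by rw [h2, this])
  · -- uniqueness
    intro χ hχ
    have hVmem : ∀ v : G.V, χ.onV v = true ↔ ∃ w, m.onV w = v := by
      intro v
      constructor
      · intro hv
        have hc : (RGraphHom.id OneR : OneR ⟶ OneR) ≫ (trueHom : OneR ⟶ Omega)
            = (ptHom G v : OneR ⟶ G) ≫ χ := by
          apply RGraphHom.ext
          · funext u
            exact hv.symm
          · funext u
            show OmegaE.ltrue = χ.onE (G.loop v)
            rw [χ.map_loop, hv]; rfl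
        have := hχ.lift_snd _ _ hc
        exact ⟨(hχ.lift _ _ hc).onV (), congrFun (congrArg RGraphHom.onV this) ()⟩
      · rintro ⟨w, rfl⟩
        have := congrFun (congrArg RGraphHom.onV hχ.w) w
        simp only [comp_onV] at this
        exact this.symm
    have hEmem : ∀ e : G.E, χ.onE e = .ltrue ↔ ∃ f, m.onE f = e := by
      intro e
      constructor
      · intro he
        have hsrc : χ.onV (G.src e) = true := by
          have := χ.map_src e
          rw [he] at this; exact this.symm
        have htgt : χ.onV (G.tgt e) = true := by
          have := χ.map_tgt e
          rw [he] at this; exact this.symm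
        have hc : (bangHom WalkingEdge : WalkingEdge ⟶ OneR) ≫ (trueHom : OneR ⟶ Omega)
            = (edgeHom G e : WalkingEdge ⟶ G) ≫ χ := by
          apply RGraphHom.ext
          · funext b
            cases b
            · exact hsrc.symm
            · exact htgt.symm
          · funext x
            rcases x with (_|_) | u
            · show OmegaE.ltrue = χ.onE (G.loop (G.src e))
              rw [χ.map_loop, hsrc]; rfl
            · show OmegaE.ltrue = χ.onE (G.loop (G.tgt e))
              rw [χ.map_loop, htgt]; rfl
            · exact he.symm
        have := hχ.lift_snd _ _ hc
        exact ⟨(hχ.lift _ _ hc).onE (.inr ()), congrFun (congrArg RGraphHom.onE this) (.inr ())⟩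
      · rintro ⟨f, rfl⟩
        have := congrFun (congrArg RGraphHom.onE hχ.w) f
        simp only [comp_onE] at this
        exact this.symm
    have hVeq : ∀ v, χ.onV v = chiV m v := by
      intro v
      rcases hb : χ.onV v with _ | _
      · rcases hc : chiV m v with _ | _
        · rfl
        · rw [(hVmem v).mpr ((chiV_eq_true_iff m).mp hc)] at hb; exact hb.symm ▸ rfl
      · exact ((chiV_true m ((hVmem v).mp hb))).symm
    apply RGraphHom.ext
    · funext v
      exact hVeq v
    · funext e
      rcases he : χ.onE e with _ | _ | _ | _ | _
      · exact ((chiE_eq_ltrue_iff m).mpr ((hEmem e).mp he)).symm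
      all_goals {
        have hne : ¬ ∃ f, m.onE f = e := by
          intro h
          have h2 := (hEmem e).mpr h
          rw [he] at h2
          exact absurd h2 (by simp)
        have hsrc : chiV m (G.src e) = Omega.src (χ.onE e) := by
          rw [← hVeq, χ.map_src]
        have htgt : chiV m (G.tgt e) = Omega.tgt (χ.onE e) := by
          rw [← hVeq, χ.map_tgt]
        rw [he] at hsrc htgt
        show _ = chiE m e
        unfold chiE
        rw [if_neg hne, hsrc, htgt]; rfl
      }
end

section
/- Lawvere's fixed point theorem: in a cartesian closed category, if there is a point-surjective morphism q : A → B^A, then every endomorphism f : B → B has a fixed point among global elements. -/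
open CategoryTheory MonoidalCategory CartesianClosed in
/-- Lawvere's fixed point theorem: in a cartesian closed category, if there is
a point-surjective morphism `q : A → B^A`, then every endomorphism `f : B → B`
has a fixed point among global elements. -/
theorem lawvere_fixed_point {C : Type*} [Category C]
    [CartesianMonoidalCategory C] [MonoidalClosed C] {A B : C} (q : A ⟶ (A ⟹ B))
    (hq : ∀ g : 𝟙_ C ⟶ (A ⟹ B), ∃ a : 𝟙_ C ⟶ A, a ≫ q = g) (f : B ⟶ B) :
    ∃ b : 𝟙_ C ⟶ B, b ≫ f = b := by
  let t : A ⟶ B := CartesianMonoidalCategory.lift (𝟙 A) q ≫ (ihom.ev A).app B ≫ f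
  obtain ⟨a, ha⟩ := hq (MonoidalClosed.curry (CartesianMonoidalCategory.fst _ _ ≫ t))
  refine ⟨a ≫ t, ?_⟩
  have h1 : a ≫ CartesianMonoidalCategory.lift (𝟙 A) q
      = CartesianMonoidalCategory.lift a (𝟙 _) ≫ (A ◁ (a ≫ q)) := by
    ext <;> simp
  have h2 := MonoidalClosed.uncurry_curry (A := A)
    (CartesianMonoidalCategory.fst A (𝟙_ C) ≫ t)
  rw [MonoidalClosed.uncurry_eq] at h2
  have key : a ≫ t = (a ≫ t) ≫ f := by
    conv_lhs => rw [show t = CartesianMonoidalCategory.lift (𝟙 A) q ≫ (ihom.ev A).app B ≫ f from rfl,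
      reassoc_of% h1, ha, reassoc_of% h2, CartesianMonoidalCategory.lift_fst_assoc]
    simp only [t, Category.assoc]
  exact key.symm
end

section
/- Exponential completeness: if G is a complete rgraph, then the exponential G^H in the category of reflexive directed graphs is complete for any rgraph H. -/
/-- The inclusion of `H` into `E × H` at the vertex `b` of the walking-edge
rgraph. -/
def inclAt (b : Bool) (H : RGraph) : RGraphHom H (WalkingEdge.prod H) :=
  ⟨fun v => (b, v), fun e => (.inl b, e), fun _ => rfl, fun _ => rfl, fun _ => rfl⟩

/-- The exponential rgraph `G^H`: vertices are rgraph morphisms `H → G`, edges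
are rgraph morphisms `E × H → G` (where `E` is the walking-edge rgraph), with
source/target given by restricting along the two inclusions `H → E × H` and
distinguished loops given by precomposition with the projection `E × H → H`. -/
def RGraph.exp (H G : RGraph) : RGraph :=
  ⟨RGraphHom H G, RGraphHom (WalkingEdge.prod H) G,
    fun m => (inclAt false H).comp m,
    fun m => (inclAt true H).comp m,
    fun f => (RGraph.snd WalkingEdge H).comp f,
    fun _ => rfl, fun _ => rfl⟩

/-- An rgraph is complete if for every ordered pair of vertices `(u, v)` there
is exactly one edge with source `u` and target `v`. -/
def RGraph.Complete (G : RGraph) : Prop :=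
  ∀ u v : G.V, ∃! e : G.E, G.src e = u ∧ G.tgt e = v

/-- Exponential completeness: if `G` is a complete rgraph, then the exponential
`G^H` is complete for any rgraph `H`. -/
theorem exp_complete (G H : RGraph) (hG : G.Complete) :
    (RGraph.exp H G).Complete := by
  intro u v
  -- the chosen edge in G from a to b
  let ed : G.V → G.V → G.E := fun a b => (hG a b).choose
  have ed_src : ∀ a b, G.src (ed a b) = a := fun a b => (hG a b).choose_spec.1.1
  have ed_tgt : ∀ a b, G.tgt (ed a b) = b := fun a b => (hG a b).choose_spec.1.2
  have ed_uniq : ∀ a b e, G.src e = a → G.tgt e = b → e = ed a b :=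
    fun a b e hs ht => (hG a b).choose_spec.2 e ⟨hs, ht⟩
  refine ⟨⟨fun p => match p with
      | (false, h) => u.onV h
      | (true, h) => v.onV h,
    fun e => match e with
      | (.inl false, e) => u.onE e
      | (.inl true, e) => v.onE e
      | (.inr _, e) => ed (u.onV (H.src e)) (v.onV (H.tgt e)),
    ?_, ?_, ?_⟩, ⟨?_, ?_⟩, ?_⟩
  · rintro ⟨(_|_) | ⟨⟩, e⟩
    · exact u.map_src e
    · exact v.map_src e
    · exact ed_src _ _
  · rintro ⟨(_|_) | ⟨⟩, e⟩
    · exact u.map_tgt e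
    · exact v.map_tgt e
    · exact ed_tgt _ _
  · rintro ⟨(_|_), h⟩
    · exact u.map_loop h
    · exact v.map_loop h
  · apply RGraphHom.ext <;> rfl
  · apply RGraphHom.ext <;> rfl
  · rintro m ⟨hs, ht⟩
    have hsV : ∀ h, m.onV (false, h) = u.onV h := fun h => congrArg (·.onV h) hs
    have htV : ∀ h, m.onV (true, h) = v.onV h := fun h => congrArg (·.onV h) ht
    have hsE : ∀ e, m.onE (.inl false, e) = u.onE e := fun e => congrArg (·.onE e) hs
    have htE : ∀ e, m.onE (.inl true, e) = v.onE e := fun e => congrArg (·.onE e) ht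
    refine RGraphHom.ext ?_ ?_
    · funext p
      obtain ⟨(_|_), h⟩ := p
      · exact hsV h
      · exact htV h
    · funext p
      obtain ⟨(_|_) | ⟨⟩, e⟩ := p
      · exact hsE e
      · exact htE e
      · refine ed_uniq _ _ _ ?_ ?_
        · exact (m.map_src _).trans (hsV _)
        · exact (m.map_tgt _).trans (htV _)
end

section
/- If an rgraph U had the property that every rgraph is (isomorphic to) a vertex of U and there is an injection J from the vertices of K_2^U into the vertices of U, then there is a morphism F : U → K_2^U that is onto for global elements, contradicting Lawvere's corollary; hence no such 'unlimited' U exists. -/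
/-- The complete rgraph `K₂` on two vertices: there is exactly one edge for
each ordered pair of vertices (the loops being the distinguished ones). -/
def K2 : RGraph :=
  ⟨Bool, Bool × Bool, Prod.fst, Prod.snd, fun v => (v, v),
    fun _ => rfl, fun _ => rfl⟩

/-- A subrgraph of an rgraph `G`: sets of vertices and edges closed under
sources, targets and distinguished loops. -/
@[ext]
structure SubRGraph (G : RGraph) where
  verts : Set G.V
  edges : Set G.E
  src_mem : ∀ e ∈ edges, G.src e ∈ verts
  tgt_mem : ∀ e ∈ edges, G.tgt e ∈ verts
  loop_mem : ∀ v ∈ verts, G.loop v ∈ edges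

/-- A subrgraph is a tournament if between any two distinct vertices there is
exactly one edge (in one direction or the other). -/
def SubRGraph.IsTournament {G : RGraph} (S : SubRGraph G) : Prop :=
  ∀ u v, u ∈ S.verts → v ∈ S.verts → u ≠ v →
    ∃! e, e ∈ S.edges ∧
      ((G.src e = u ∧ G.tgt e = v) ∨ (G.src e = v ∧ G.tgt e = u))

/-- An isomorphism of rgraphs. -/
structure RGraphIso (G H : RGraph) where
  hom : RGraphHom G H
  inv : RGraphHom H G
  hom_inv : hom.comp inv = RGraphHom.id G
  inv_hom : inv.comp hom = RGraphHom.id H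

/-! ### Auxiliary constructions -/

/-- Any vertex function into `K2` extends to an rgraph morphism. -/
def vertexHom (U : RGraph) (f : U.V → Bool) : RGraphHom U K2 :=
  ⟨f, fun e => (f (U.src e), f (U.tgt e)), fun _ => rfl, fun _ => rfl,
    fun v => by show (f (U.src (U.loop v)), f (U.tgt (U.loop v))) = (f v, f v)
                rw [U.loop_src, U.loop_tgt]⟩

/-- The edge of `K₂^U` between two given vertices. -/
def edgeBetween (U : RGraph) (y0 y1 : RGraphHom U K2) :
    RGraphHom (WalkingEdge.prod U) K2 where
  onV p := (match p.1 with | false => y0 | true => y1).onV p.2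
  onE p := match p.1 with
    | .inl false => y0.onE p.2
    | .inl true => y1.onE p.2
    | .inr _ => (y0.onV (U.src p.2), y1.onV (U.tgt p.2))
  map_src := by
    rintro ⟨(b | u), e⟩
    · cases b
      · exact y0.map_src e
      · exact y1.map_src e
    · rfl
  map_tgt := by
    rintro ⟨(b | u), e⟩
    · cases b
      · exact y0.map_tgt e
      · exact y1.map_tgt e
    · rfl
  map_loop := by
    rintro ⟨b, v⟩
    cases b
    · exact y0.map_loop v
    · exact y1.map_loop v

lemma edgeBetween_src (U : RGraph) (y0 y1 : RGraphHom U K2) :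
    (RGraph.exp U K2).src (edgeBetween U y0 y1) = y0 := rfl

lemma edgeBetween_tgt (U : RGraph) (y0 y1 : RGraphHom U K2) :
    (RGraph.exp U K2).tgt (edgeBetween U y0 y1) = y1 := rfl

lemma edgeBetween_diag (U : RGraph) (y : RGraphHom U K2) :
    edgeBetween U y y = (RGraph.exp U K2).loop y := by
  apply RGraphHom.ext
  · funext p
    obtain ⟨b, v⟩ := p
    cases b <;> rfl
  · funext p
    obtain ⟨f, e⟩ := p
    show _ = y.onE e
    rcases f with b | u
    · cases b <;> rfl
    · show (y.onV (U.src e), y.onV (U.tgt e)) = y.onE e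
      have h1 := y.map_src e
      have h2 := y.map_tgt e
      exact Prod.ext h1.symm h2.symm

open Classical in
/-- The vertex map of the point-surjective morphism. -/
noncomputable def FV (U : RGraph) (J : (RGraph.exp U K2).V → U.V) (x : U.V) :
    (RGraph.exp U K2).V :=
  if h : ∃ y, J y = x then h.choose else vertexHom U (fun _ => false)

lemma FV_J (U : RGraph) (J : (RGraph.exp U K2).V → U.V)
    (hJ : Function.Injective J) (y : (RGraph.exp U K2).V) :
    FV U J (J y) = y := by
  have h : ∃ z, J z = J y := ⟨y, rfl⟩
  rw [FV]
  exact Eq.trans (dif_pos h) (hJ h.choose_spec)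

/-- The point-surjective morphism `F : U → K₂^U`. -/
noncomputable def Fhom (U : RGraph) (J : (RGraph.exp U K2).V → U.V) :
    RGraphHom U (RGraph.exp U K2) where
  onV := FV U J
  onE e := edgeBetween U (FV U J (U.src e)) (FV U J (U.tgt e))
  map_src e := edgeBetween_src U _ _
  map_tgt e := edgeBetween_tgt U _ _
  map_loop v := by
    show edgeBetween U (FV U J (U.src (U.loop v))) (FV U J (U.tgt (U.loop v))) = _
    rw [U.loop_src, U.loop_tgt]
    exact edgeBetween_diag U _

/-- The global element of `U` at a vertex. -/
def globalAt (U : RGraph) (v : U.V) : RGraphHom OneR U :=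
  ⟨fun _ => v, fun _ => U.loop v, fun _ => U.loop_src v, fun _ => U.loop_tgt v,
    fun _ => rfl⟩

/-- If an rgraph `U` had the property that every rgraph is isomorphic to (the
rgraph represented by) one of its vertices, and there is an injection `J` from
the vertices of `K₂^U` into the vertices of `U`, then there would be a
morphism `F : U → K₂^U` that is onto for global elements — contradicting
Lawvere's fixed-point corollary.  Hence no such `unlimited` rgraph `U` exists. -/
theorem no_unlimited_rgraph (U : RGraph) (repr : U.V → RGraph)
    (hrepr : ∀ G : RGraph, ∃ v : U.V, Nonempty (RGraphIso (repr v) G))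
    (J : (RGraph.exp U K2).V → U.V) (hJ : Function.Injective J) :
    (∃ F : RGraphHom U (RGraph.exp U K2),
        ∀ g : RGraphHom OneR (RGraph.exp U K2),
          ∃ a : RGraphHom OneR U, a.comp F = g) ∧ False := by
  constructor
  · refine ⟨Fhom U J, fun g => ?_⟩
    set y := g.onV () with hy
    refine ⟨globalAt U (J y), ?_⟩
    apply RGraphHom.ext
    · funext u
      cases u
      show FV U J (J y) = g.onV ()
      rw [FV_J U J hJ]
    · funext u
      cases u
      show (Fhom U J).onE (U.loop (J y)) = g.onE ()
      rw [(Fhom U J).map_loop]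
      show (RGraph.exp U K2).loop (FV U J (J y)) = g.onE ()
      rw [FV_J U J hJ]
      have := g.map_loop ()
      exact this.symm
  · -- Lawvere diagonal argument
    set F := Fhom U J with hF
    set q : RGraphHom U K2 := vertexHom U (fun x => !((F.onV x).onV x)) with hq
    have hfix : F.onV (J q) = q := FV_J U J hJ q
    have h2 : q.onV (J q) = !((F.onV (J q)).onV (J q)) := rfl
    rw [hfix] at h2
    cases h : q.onV (J q) <;> rw [h] at h2 <;> simp at h2
end
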